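/- Let f : ℝᵈ → ℝ and V : ℝᵈ → ℝᵈ be continuously differentiable with V bounded with bounded derivative, and let Ω ⊆ ℝᵈ be a bounded measurable set. For t near 0 set Ω_t := (I + tV)(Ω). Then t ↦ ∫_{Ω_t} f dx is differentiable at t = 0 with derivative ∫_Ω (∇f · V + f · div V) dx = ∫_Ω div(f V) dx. -/

import Mathlib

open MeasureTheory

set_option maxHeartbeats 1000000

open MeasureTheory Polynomial Metric Set

lemma aux_contDiff_det {n : ℕ} :
    ContDiff ℝ 1 (fun M : Fin n → Fin n → ℝ => Matrix.det (Matrix.of M)) := by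
  simp_rw [Matrix.det_apply']
  refine ContDiff.sum fun σ _ => ContDiff.mul contDiff_const ?_
  exact contDiff_prod fun i _ => contDiff_apply_apply ℝ ℝ (σ i) i

lemma aux_hasDerivAt_det {n : ℕ} (M : Matrix (Fin n) (Fin n) ℝ) :
    HasDerivAt (fun t : ℝ => (1 + t • M).det) M.trace 0 := by
  have h : ∀ t : ℝ, (1 + t • M).det
      = 1 + M.trace * t + (Matrix.det (1 + (X : ℝ[X]) • M.map C)).divX.divX.eval t * t ^ 2 :=
    fun t => Matrix.det_one_add_smul t M
  simp_rw [h]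
  set q := (Matrix.det (1 + (X : ℝ[X]) • M.map C)).divX.divX
  have h1 : HasDerivAt (fun t : ℝ => M.trace * t) M.trace 0 := by
    simpa using (hasDerivAt_id (0:ℝ)).const_mul M.trace
  have h2 : HasDerivAt (fun t : ℝ => q.eval t * t ^ 2) 0 0 := by
    exact ((q.hasDerivAt 0).mul (hasDerivAt_pow 2 0)).congr_deriv (by simp)
  exact (((hasDerivAt_const (0:ℝ) (1:ℝ)).add h1).add h2).congr_deriv (by simp)

theorem aux_main {E : Type*} [NormedAddCommGroup E] [NormedSpace ℝ E]
    [FiniteDimensional ℝ E] [MeasurableSpace E] [BorelSpace E]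
    (μ : Measure E) [μ.IsAddHaarMeasure]
    (f : E → ℝ) (V : E → E)
    (hf : ContDiff ℝ 1 f) (hV : ContDiff ℝ 1 V)
    (C : ℝ) (hC : ∀ x, ‖V x‖ ≤ C ∧ ‖fderiv ℝ V x‖ ≤ C)
    (Ω : Set E)
    (hΩm : MeasurableSet Ω) (hΩb : Bornology.IsBounded Ω) :
    HasDerivAt (fun t : ℝ => ∫ x in (fun y => y + t • V y) '' Ω, f x ∂μ)
      (∫ x in Ω, (fderiv ℝ f x (V x) +
        f x * LinearMap.trace ℝ E (fderiv ℝ V x)) ∂μ) 0 := by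
  have hC0 : 0 ≤ C := le_trans (norm_nonneg _) (hC 0).1
  have hfd : Differentiable ℝ f := hf.differentiable one_ne_zero
  have hVd : Differentiable ℝ V := hV.differentiable one_ne_zero
  have hVlip : ∀ x y : E, ‖V x - V y‖ ≤ C * ‖x - y‖ := fun x y =>
    Convex.norm_image_sub_le_of_norm_fderiv_le
      (fun z _ => hVd z) (fun z _ => (hC z).2) convex_univ (mem_univ y) (mem_univ x)
  -- basis and matrix representation
  set b : Module.Basis (Fin (Module.finrank ℝ E)) ℝ E := Module.finBasis ℝ E with hb
  set τ : (E →L[ℝ] E) →ₗ[ℝ] (Fin (Module.finrank ℝ E) → Fin (Module.finrank ℝ E) → ℝ) :=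
    { toFun := fun A => (LinearMap.toMatrix b b (A : E →ₗ[ℝ] E) : Matrix (Fin (Module.finrank ℝ E)) (Fin (Module.finrank ℝ E)) ℝ)
      map_add' := by intro A B; simp; rfl
      map_smul' := by intro c A; simp; rfl } with hτ
  have hτc : Continuous τ := τ.continuous_of_finiteDimensional
  set τ' : (E →L[ℝ] E) →L[ℝ] (Fin (Module.finrank ℝ E) → Fin (Module.finrank ℝ E) → ℝ) := LinearMap.toContinuousLinearMap τ with hτ'
  set m : E → (Fin (Module.finrank ℝ E) → Fin (Module.finrank ℝ E) → ℝ) := fun x => τ (fderiv ℝ V x) with hm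
  have hmc : Continuous m := hτc.comp (hV.continuous_fderiv one_ne_zero)
  set Cm : ℝ := ‖τ'‖ * C with hCm
  have hCm0 : 0 ≤ Cm := mul_nonneg (ContinuousLinearMap.opNorm_nonneg _) hC0
  have hmb : ∀ x, ‖m x‖ ≤ Cm := by
    intro x
    rw [hCm]
    refine le_trans (τ'.le_opNorm (fderiv ℝ V x)) ?_
    exact mul_le_mul_of_nonneg_left (hC x).2 (ContinuousLinearMap.opNorm_nonneg τ')
  -- the determinant function
  set F : ℝ × (Fin (Module.finrank ℝ E) → Fin (Module.finrank ℝ E) → ℝ) → ℝ := fun p => Matrix.det (1 + p.1 • Matrix.of p.2) with hF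
  have hFc : ContDiff ℝ 1 F := by
    have : F = (fun M : Fin (Module.finrank ℝ E) → Fin (Module.finrank ℝ E) → ℝ => Matrix.det (Matrix.of M)) ∘
        (fun p : ℝ × (Fin (Module.finrank ℝ E) → Fin (Module.finrank ℝ E) → ℝ) => Matrix.of.symm (1 : Matrix (Fin (Module.finrank ℝ E)) (Fin (Module.finrank ℝ E)) ℝ) + p.1 • p.2) := by
      funext p; simp only [hF, Function.comp_apply]; rfl
    rw [this]
    exact aux_contDiff_det.comp (contDiff_const.add (contDiff_fst.smul contDiff_snd))
  -- bounds on the compact set K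
  set K : Set (ℝ × (Fin (Module.finrank ℝ E) → Fin (Module.finrank ℝ E) → ℝ)) := closedBall 0 (1 + Cm) with hK
  have hKcompact : IsCompact K := isCompact_closedBall _ _
  have hKconvex : Convex ℝ K := convex_closedBall _ _
  obtain ⟨L, hL⟩ := hKcompact.exists_bound_of_continuousOn
    ((hFc.continuous_fderiv one_ne_zero).continuousOn (s := K))
  obtain ⟨Md, hMd⟩ := hKcompact.exists_bound_of_continuousOn (hFc.continuous.continuousOn (s := K))
  have hmemK : ∀ (t : ℝ) (x : E), |t| ≤ 1 → (t, m x) ∈ K := by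
    intro t x ht
    simp only [hK, mem_closedBall, dist_zero_right, Prod.norm_def]
    exact max_le (by simpa using le_add_of_le_of_nonneg ht hCm0)
      (le_add_of_nonneg_of_le zero_le_one (hmb x))
  have hL0 : 0 ≤ L := le_trans (norm_nonneg _) (hL 0 (by simp [hK]; positivity))
  have hMd0 : 0 ≤ Md := le_trans (norm_nonneg _) (hMd 0 (by simp [hK]; positivity))
  have hFlip : ∀ p ∈ K, ∀ q ∈ K, ‖F p - F q‖ ≤ L * ‖p - q‖ := fun p hp q hq =>
    Convex.norm_image_sub_le_of_norm_fderiv_le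
      (fun z _ => (hFc.differentiable one_ne_zero) z) (fun z hz => hL z hz) hKconvex hq hp
  -- bounds on f on a big ball
  obtain ⟨R₀, hR₀⟩ := hΩb.subset_closedBall 0
  set R : ℝ := max R₀ 0 + C + 1 with hR
  have hΩR : ∀ x ∈ Ω, ‖x‖ ≤ max R₀ 0 := by
    intro x hx
    have := hR₀ hx
    simp only [mem_closedBall, dist_zero_right] at this
    exact le_max_of_le_left this
  set K2 : Set E := closedBall 0 R with hK2
  have hK2compact : IsCompact K2 := isCompact_closedBall _ _
  obtain ⟨Lf, hLf⟩ := hK2compact.exists_bound_of_continuousOn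
    ((hf.continuous_fderiv one_ne_zero).continuousOn (s := K2))
  obtain ⟨Mf, hMf⟩ := hK2compact.exists_bound_of_continuousOn (hf.continuous.continuousOn (s := K2))
  have hR0 : 0 ≤ R := by positivity
  have hLf0 : 0 ≤ Lf := le_trans (norm_nonneg _) (hLf 0 (by simp [hK2, hR0]))
  have hMf0 : 0 ≤ Mf := le_trans (norm_nonneg _) (hMf 0 (by simp [hK2, hR0]))
  have hflip : ∀ p ∈ K2, ∀ q ∈ K2, ‖f p - f q‖ ≤ Lf * ‖p - q‖ := fun p hp q hq =>
    Convex.norm_image_sub_le_of_norm_fderiv_le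
      (fun z _ => hfd z) (fun z hz => hLf z hz) (convex_closedBall _ _) hq hp
  have hmemK2 : ∀ (t : ℝ) (x : E), |t| ≤ 1 → x ∈ Ω → x + t • V x ∈ K2 := by
    intro t x ht hx
    simp only [hK2, mem_closedBall, dist_zero_right]
    have h1 : ‖x + t • V x‖ ≤ ‖x‖ + |t| * ‖V x‖ := by
      simpa [norm_smul] using norm_add_le x (t • V x)
    have h2 : |t| * ‖V x‖ ≤ 1 * C := mul_le_mul ht (hC x).1 (norm_nonneg _) zero_le_one
    have := hΩR x hx
    simp only [hR]; linarith
  -- the integrand after change of variables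
  set g : ℝ → E → ℝ := fun t x => |F (t, m x)| * f (x + t • V x) with hg
  set F' : E → ℝ := fun x => fderiv ℝ f x (V x) + f x * Matrix.trace (Matrix.of (m x)) with hF'
  set ε : ℝ := min 1 (1 / (C + 1)) with hε
  have hε0 : 0 < ε := by positivity
  have hε1 : ε ≤ 1 := min_le_left _ _
  -- injectivity
  have hinj : ∀ t : ℝ, |t| < ε → Set.InjOn (fun y => y + t • V y) Ω := by
    intro t ht x hx y hy hxy
    simp only at hxy
    by_contra hne
    have h1 : x - y = t • V y - t • V x := by
      rw [sub_eq_sub_iff_add_eq_add, hxy, add_comm]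
    have h1' : x - y = t • (V y - V x) := by rw [h1, smul_sub]
    have hxyn : 0 < ‖x - y‖ := by rw [norm_pos_iff]; exact sub_ne_zero.mpr hne
    have h3 : ‖V y - V x‖ ≤ C * ‖x - y‖ := by
      have h3 := hVlip y x
      rwa [norm_sub_rev y x] at h3
    have h2 : ‖x - y‖ ≤ |t| * (C * ‖x - y‖) := by
      conv_lhs => rw [h1', norm_smul, Real.norm_eq_abs]
      exact mul_le_mul_of_nonneg_left h3 (abs_nonneg t)
    have htC : |t| * C < 1 := by
      have h4 : |t| < 1 / (C + 1) := lt_of_lt_of_le ht (min_le_right _ _)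
      calc |t| * C ≤ |t| * (C + 1) := by nlinarith [abs_nonneg t]
      _ < (1 / (C + 1)) * (C + 1) := by apply mul_lt_mul_of_pos_right h4; positivity
      _ = 1 := by field_simp
    have h5 : |t| * (C * ‖x - y‖) = (|t| * C) * ‖x - y‖ := by ring
    have h6 := mul_lt_mul_of_pos_right htC hxyn
    linarith
  -- determinant identification
  have hdet : ∀ (t : ℝ) (x : E),
      ((ContinuousLinearMap.id ℝ E) + t • fderiv ℝ V x).det = F (t, m x) := by
    intro t x
    show LinearMap.det _ = _
    rw [← LinearMap.det_toMatrix b]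
    congr 1
    show LinearMap.toMatrix b b ((ContinuousLinearMap.id ℝ E + t • fderiv ℝ V x : E →L[ℝ] E) : E →ₗ[ℝ] E) = _
    rw [ContinuousLinearMap.coe_add, ContinuousLinearMap.coe_smul, map_add, _root_.map_smul]
    show _ = (1 : Matrix (Fin (Module.finrank ℝ E)) (Fin (Module.finrank ℝ E)) ℝ) + t • Matrix.of (m x)
    rw [ContinuousLinearMap.coe_id, LinearMap.toMatrix_id]
    rfl
  -- change of variables, eventually in t
  have h_eq : ∀ᶠ t in nhds (0:ℝ), (∫ x in (fun y => y + t • V y) '' Ω, f x ∂μ)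
      = ∫ x in Ω, g t x ∂μ := by
    filter_upwards [Metric.ball_mem_nhds (0:ℝ) hε0] with t ht
    simp only [mem_ball, dist_zero_right, Real.norm_eq_abs] at ht
    have hder : ∀ x ∈ Ω, HasFDerivWithinAt (fun y => y + t • V y)
        ((ContinuousLinearMap.id ℝ E) + t • fderiv ℝ V x) Ω x := by
      intro x _
      exact ((hasFDerivAt_id x).add ((hVd x).hasFDerivAt.const_smul t)).hasFDerivWithinAt
    rw [integral_image_eq_integral_abs_det_fderiv_smul μ hΩm hder (hinj t ht) f]
    apply setIntegral_congr_fun hΩm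
    intro x _
    simp only [hg, smul_eq_mul, hdet t x]
  -- derivative of g in t at 0, pointwise
  have h_diff : ∀ x ∈ Ω, HasDerivAt (fun t => g t x) (F' x) 0 := by
    intro x _
    have hdet0 : HasDerivAt (fun t : ℝ => F (t, m x)) (Matrix.trace (Matrix.of (m x))) 0 :=
      aux_hasDerivAt_det (Matrix.of (m x))
    have hcont : ContinuousAt (fun t : ℝ => F (t, m x)) 0 := hdet0.continuousAt
    have hpos : ∀ᶠ t in nhds (0:ℝ), 0 < F (t, m x) := by
      have h0 : F (0, m x) = 1 := by simp [hF]
      have hc2 : Filter.Tendsto (fun t : ℝ => F (t, m x)) (nhds 0) (nhds 1) := by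
        rw [← h0]; exact hcont
      exact hc2.eventually (eventually_gt_nhds zero_lt_one)
    have habs : HasDerivAt (fun t : ℝ => |F (t, m x)|) (Matrix.trace (Matrix.of (m x))) 0 :=
      hdet0.congr_of_eventuallyEq (hpos.mono fun t ht => by show |F (t, m x)| = F (t, m x); rw [abs_of_pos ht])
    have hinner : HasDerivAt (fun t : ℝ => x + t • V x) (V x) 0 := by
      simpa using ((hasDerivAt_id (0:ℝ)).smul_const (V x)).const_add x
    have hcomp : HasDerivAt (fun t : ℝ => f (x + t • V x)) (fderiv ℝ f x (V x)) 0 := by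
      have := (hfd (x + (0:ℝ) • V x)).hasFDerivAt.comp_hasDerivAt 0 hinner
      exact this.congr_deriv (by simp)
    have := habs.mul hcomp
    simp only [zero_smul, add_zero] at this
    have h0 : F (0, m x) = 1 := by simp [hF]
    rw [h0] at this
    simp only [abs_one, one_mul] at this
    exact this.congr_deriv (by simp only [hF']; ring)
  -- Lipschitz bound
  set B : ℝ := Md * (Lf * C) + Mf * L with hB
  have h_lip : ∀ x ∈ Ω, LipschitzOnWith (Real.nnabs B) (fun t => g t x) (ball (0:ℝ) ε) := by
    intro x hx
    rw [lipschitzOnWith_iff_dist_le_mul]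
    intro t ht s hs
    simp only [mem_ball, dist_zero_right, Real.norm_eq_abs] at ht hs
    have ht1 : |t| ≤ 1 := le_of_lt (lt_of_lt_of_le ht hε1)
    have hs1 : |s| ≤ 1 := le_of_lt (lt_of_lt_of_le hs hε1)
    rw [Real.dist_eq, Real.dist_eq]
    have hFt := hMd _ (hmemK t x ht1)
    have hFs := hMd _ (hmemK s x hs1)
    have hfs := hMf _ (hmemK2 s x hs1 hx)
    have key : |g t x - g s x| ≤ B * |t - s| := by
      have e1 : g t x - g s x = |F (t, m x)| * (f (x + t • V x) - f (x + s • V x))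
          + (|F (t, m x)| - |F (s, m x)|) * f (x + s • V x) := by simp only [hg]; ring
      have b1 : |f (x + t • V x) - f (x + s • V x)| ≤ Lf * (C * |t - s|) := by
        have := hflip _ (hmemK2 t x ht1 hx) _ (hmemK2 s x hs1 hx)
        rw [Real.norm_eq_abs] at this
        have h5 : ‖x + t • V x - (x + s • V x)‖ = ‖(t - s) • V x‖ := by
          congr 1; module
        rw [h5, norm_smul, Real.norm_eq_abs] at this
        calc |f (x + t • V x) - f (x + s • V x)| ≤ Lf * (|t - s| * ‖V x‖) := this
        _ ≤ Lf * (C * |t - s|) := by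
            rw [mul_comm (|t - s|)]
            gcongr
            exact (hC x).1
      have b2 : |F (t, m x) - F (s, m x)| ≤ L * |t - s| := by
        have := hFlip _ (hmemK t x ht1) _ (hmemK s x hs1)
        rw [Real.norm_eq_abs] at this
        have h6 : ‖((t : ℝ), m x) - (s, m x)‖ = |t - s| := by
          simp [Prod.norm_def, Prod.sub_def, abs_nonneg]
        rwa [h6] at this
      have b3 : |(|F (t, m x)| - |F (s, m x)|)| ≤ L * |t - s| :=
        le_trans (abs_abs_sub_abs_le_abs_sub _ _) b2
      calc |g t x - g s x| ≤ |F (t, m x)| * |f (x + t • V x) - f (x + s • V x)|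
            + |(|F (t, m x)| - |F (s, m x)|)| * |f (x + s • V x)| := by
              rw [e1]
              refine le_trans (abs_add_le _ _) ?_
              rw [abs_mul, abs_mul, abs_abs]
      _ ≤ Md * (Lf * (C * |t - s|)) + (L * |t - s|) * Mf := by
          refine add_le_add (mul_le_mul ?_ b1 (abs_nonneg _) hMd0)
            (mul_le_mul b3 ?_ (abs_nonneg _) (by positivity))
          · simpa using hFt
          · simpa using hfs
      _ = B * |t - s| := by rw [hB]; ring
    calc |g t x - g s x| ≤ B * |t - s| := key
    _ ≤ |B| * |t - s| := by gcongr; exact le_abs_self B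
    _ = (Real.nnabs B : ℝ) * |t - s| := by rw [Real.coe_nnabs]
  -- measure finiteness
  have hμΩ : μ Ω < ⊤ := hΩb.measure_lt_top
  -- measurability
  have hgcont : ∀ t : ℝ, Continuous (g t) := by
    intro t
    exact (continuous_abs.comp (hFc.continuous.comp (continuous_const.prodMk hmc))).mul
      (hf.continuous.comp (continuous_id.add (hV.continuous.const_smul t)))
  have hF'cont : Continuous F' := by
    apply Continuous.add
    · exact (hf.continuous_fderiv one_ne_zero).clm_apply hV.continuous
    · exact hf.continuous.mul (Continuous.matrix_trace (A := fun x => Matrix.of (m x)) hmc)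
  -- apply dominated differentiation
  have main := hasDerivAt_integral_of_dominated_loc_of_lip (μ := μ.restrict Ω)
    (F := g) (F' := F') (x₀ := 0) (bound := fun _ => B) (Metric.ball_mem_nhds (0:ℝ) hε0)
    (Filter.Eventually.of_forall fun t => (hgcont t).aestronglyMeasurable)
    (((hgcont 0).continuousOn.integrableOn_compact hΩb.isCompact_closure).mono_set
      subset_closure)
    hF'cont.aestronglyMeasurable
    ((ae_restrict_iff' hΩm).2 (Filter.Eventually.of_forall h_lip))
    (integrableOn_const hμΩ.ne)
    ((ae_restrict_iff' hΩm).2 (Filter.Eventually.of_forall h_diff))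
  have hmain := main.2
  have hfinal : (∫ x in Ω, F' x ∂μ)
      = ∫ x in Ω, (fderiv ℝ f x (V x) + f x * LinearMap.trace ℝ E (fderiv ℝ V x)) ∂μ := by
    apply setIntegral_congr_fun hΩm
    intro x _
    simp only [hF']
    congr 2
    rw [LinearMap.trace_eq_matrix_trace ℝ b]
    rfl
  rw [hfinal] at hmain
  exact hmain.congr_of_eventuallyEq h_eq

/-- For f, V continuously differentiable with V bounded with bounded
derivative and Ω bounded measurable, with Ω_t := (I + tV)(Ω), the map
t ↦ ∫_{Ω_t} f dx is differentiable at t = 0 with derivative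
∫_Ω (∇f · V + f · div V) dx, where div V = trace(DV). -/
theorem stmt_17 {d : ℕ}
    (f : EuclideanSpace ℝ (Fin d) → ℝ)
    (V : EuclideanSpace ℝ (Fin d) → EuclideanSpace ℝ (Fin d))
    (hf : ContDiff ℝ 1 f) (hV : ContDiff ℝ 1 V)
    (hVb : ∃ C : ℝ, ∀ x, ‖V x‖ ≤ C ∧ ‖fderiv ℝ V x‖ ≤ C)
    (Ω : Set (EuclideanSpace ℝ (Fin d)))
    (hΩm : MeasurableSet Ω) (hΩb : Bornology.IsBounded Ω) :
    HasDerivAt (fun t : ℝ => ∫ x in (fun y => y + t • V y) '' Ω, f x)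
      (∫ x in Ω, (fderiv ℝ f x (V x) +
        f x * LinearMap.trace ℝ (EuclideanSpace ℝ (Fin d)) (fderiv ℝ V x))) 0 := by
  obtain ⟨C, hC⟩ := hVb
  exact aux_main volume f V hf hV C hC Ω hΩm hΩb
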